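/- arXiv:1311.1288 — 6 statements merged into one kernel-verified Lean document; each statement's English description precedes it below -/
import Mathlib

section
/- Fix P > 0, T > 0, and 0 < K < T with total energy budget PT. Writing E = α·P·T and P_d = (PT − E)/(T − K) for α ∈ (0,1), the effective SNR ρ(α) = P_d·E/(K·P_d + E + 1) is a strictly concave function of α on (0,1). -/
private lemma strictConcaveOn_congr' {s : Set ℝ} {f g : ℝ → ℝ} (h : Set.EqOn f g s)
    (hg : StrictConcaveOn ℝ s g) : StrictConcaveOn ℝ s f := by
  refine ⟨hg.1, fun x hx y hy hxy a b ha hb hab => ?_⟩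
  rw [h hx, h hy, h (hg.1 hx hy ha.le hb.le hab)]
  exact hg.2 hx hy hxy ha hb hab

theorem snr_strictConcaveOn (P T K : ℝ) (hP : 0 < P) (hT : 0 < T)
    (hK : 0 < K) (hKT : K < T) :
    StrictConcaveOn ℝ (Set.Ioo (0 : ℝ) 1)
      (fun α : ℝ =>
        ((P * T - α * P * T) / (T - K)) * (α * P * T) /
          (K * ((P * T - α * P * T) / (T - K)) + α * P * T + 1)) := by
  have hm : (0:ℝ) < T - K := sub_pos.2 hKT
  set c : ℝ := P * T with hc
  have hc0 : 0 < c := mul_pos hP hT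
  set p : ℝ := c * (T - K) - K * c with hp
  set q : ℝ := K * c + (T - K) with hq
  have hq0 : 0 < q := by rw [hq]; positivity
  have hqp : 0 < q + p := by
    have h1 : q + p = (T - K) + c * (T - K) := by rw [hq, hp]; ring
    rw [h1]; positivity
  set g : ℝ → ℝ := fun x => (c^2*x - c^2*x^2) / (q + p*x) with hgdef
  have hD : ∀ x ∈ Set.Ioo (0:ℝ) 1, 0 < q + p*x := by
    intro x hx
    have h1 : q + p*x = K*c*(1-x) + c*(T-K)*x + (T-K) := by rw [hq, hp]; ring
    rw [h1]
    have hx0 := hx.1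
    have hx1 := hx.2
    nlinarith [mul_pos hK hc0, mul_pos hc0 hm]
  -- derivative of g
  set G1 : ℝ → ℝ := fun y =>
    ((c^2 - 2*c^2*y)*(q+p*y) - (c^2*y - c^2*y^2)*p)/(q+p*y)^2 with hG1def
  have hder : ∀ y : ℝ, q + p*y ≠ 0 → HasDerivAt g (G1 y) y := by
    intro y hy
    have h1 : HasDerivAt (fun z : ℝ => c^2*z - c^2*z^2) (c^2 - 2*c^2*y) y := by
      have h := ((hasDerivAt_id y).const_mul (c^2)).sub
        ((hasDerivAt_pow 2 y).const_mul (c^2))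
      refine h.congr_deriv ?_
      simp; ring
    have h2 : HasDerivAt (fun z : ℝ => q + p*z) p y := by
      simpa using ((hasDerivAt_id y).const_mul p).const_add q
    have := h1.div h2 hy
    exact this
  have key : StrictConcaveOn ℝ (Set.Ioo (0:ℝ) 1) g := by
    apply strictConcaveOn_of_deriv2_neg (convex_Ioo 0 1)
    · apply ContinuousOn.div
      · fun_prop
      · fun_prop
      · exact fun x hx => (hD x hx).ne'
    · intro x hx
      rw [interior_Ioo] at hx
      have hDx : 0 < q + p*x := hD x hx
      -- deriv g = G1 near x
      have hcont : ContinuousAt (fun y : ℝ => q + p*y) x := by fun_prop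
      have hU : ∀ᶠ y in nhds x, q + p*y ≠ 0 := hcont.eventually_ne hDx.ne'
      have hEq : deriv g =ᶠ[nhds x] G1 := hU.mono fun y hy => (hder y hy).deriv
      have h2 : deriv^[2] g x = deriv G1 x := by
        show deriv (deriv g) x = deriv G1 x
        exact hEq.deriv_eq
      rw [h2]
      -- compute deriv G1 x
      have hA : HasDerivAt (fun y : ℝ => c^2 - 2*c^2*y) (-(2*c^2)) x := by
        simpa using (((hasDerivAt_id x).const_mul (2*c^2)).const_sub (c^2))
      have hB : HasDerivAt (fun y : ℝ => q + p*y) p x := by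
        simpa using ((hasDerivAt_id x).const_mul p).const_add q
      have h1 : HasDerivAt (fun z : ℝ => c^2*z - c^2*z^2) (c^2 - 2*c^2*x) x := by
        have h := ((hasDerivAt_id x).const_mul (c^2)).sub
          ((hasDerivAt_pow 2 x).const_mul (c^2))
        refine h.congr_deriv ?_
        simp; ring
      have hNu : HasDerivAt (fun y : ℝ => (c^2 - 2*c^2*y)*(q+p*y) - (c^2*y - c^2*y^2)*p)
          ((-(2*c^2))*(q+p*x) + (c^2 - 2*c^2*x)*p - (c^2 - 2*c^2*x)*p) x :=
        (hA.mul hB).sub (h1.mul_const p)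
      have hDe : HasDerivAt (fun y : ℝ => (q+p*y)^2) (2*(q+p*x)*p) x := by
        have := hB.pow 2
        refine this.congr_deriv ?_
        simp
      have hne2 : (q+p*x)^2 ≠ 0 := pow_ne_zero 2 hDx.ne'
      have hG1 : HasDerivAt G1
          ((((-(2*c^2))*(q+p*x) + (c^2 - 2*c^2*x)*p - (c^2 - 2*c^2*x)*p) * (q+p*x)^2
            - ((c^2 - 2*c^2*x)*(q+p*x) - (c^2*x - c^2*x^2)*p) * (2*(q+p*x)*p))
            / ((q+p*x)^2)^2) x := hNu.div hDe hne2
      rw [hG1.deriv]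
      have hval : (((-(2*c^2))*(q+p*x) + (c^2 - 2*c^2*x)*p - (c^2 - 2*c^2*x)*p) * (q+p*x)^2
            - ((c^2 - 2*c^2*x)*(q+p*x) - (c^2*x - c^2*x^2)*p) * (2*(q+p*x)*p))
            / ((q+p*x)^2)^2 = (-(2*c^2*q*(q+p)))/(q+p*x)^3 := by
        rw [div_eq_div_iff (by positivity) (by positivity)]
        ring
      rw [hval]
      apply div_neg_of_neg_of_pos
      · have : 0 < 2*c^2*q*(q+p) := by positivity
        linarith
      · positivity
  apply strictConcaveOn_congr' _ key
  intro α hα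
  have hDα : 0 < q + p*α := hD α hα
  have hden : K * ((P * T - α * P * T) / (T - K)) + α * P * T + 1 = (q + p*α)/(T-K) := by
    rw [hq, hp, hc]
    field_simp
    ring
  have hnum : ((P * T - α * P * T) / (T - K)) * (α * P * T)
      = (c^2*α - c^2*α^2)/(T-K) := by
    rw [hc, div_mul_eq_mul_div]
    congr 1
    ring
  show ((P * T - α * P * T) / (T - K)) * (α * P * T) /
      (K * ((P * T - α * P * T) / (T - K)) + α * P * T + 1) = g α
  rw [hden, hnum, div_div_div_cancel_right₀ hm.ne']
end

section
/- If T = 2K with K > 0 and P > 0, then the choice α = 1/2 maximizes ρ(α) = P_d·E/(K·P_d + E + 1) over α ∈ (0,1), where E = αPT and P_d = (PT − E)/(T − K), and the maximum value is (PT)²/(2T(1 + PT)). -/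
theorem snr_opt_T_eq_2K (P K T : ℝ) (hP : 0 < P) (hK : 0 < K) (hT : T = 2 * K) :
    (IsMaxOn
      (fun α : ℝ =>
        ((P * T - α * P * T) / (T - K)) * (α * P * T) /
          (K * ((P * T - α * P * T) / (T - K)) + α * P * T + 1))
      (Set.Ioo (0 : ℝ) 1) (1 / 2)) ∧
    ((P * T - (1 / 2) * P * T) / (T - K)) * ((1 / 2) * P * T) /
        (K * ((P * T - (1 / 2) * P * T) / (T - K)) + (1 / 2) * P * T + 1)
      = (P * T) ^ 2 / (2 * T * (1 + P * T)) := by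
  subst hT
  have hK' : K ≠ 0 := ne_of_gt hK
  have hKP : (0:ℝ) < 2 * K * P + 1 := by positivity
  have key : ∀ x : ℝ,
      ((P * (2*K) - x * P * (2*K)) / (2*K - K)) * (x * P * (2*K)) /
        (K * ((P * (2*K) - x * P * (2*K)) / (2*K - K)) + x * P * (2*K) + 1)
      = x * (1 - x) * (2*K*P)^2 / (K * (2*K*P + 1)) := by
    intro x
    have h2 : (2:ℝ)*K - K = K := by ring
    rw [h2]
    rw [div_eq_div_iff]
    · field_simp
      ring
    · have he : K * ((P * (2*K) - x * P * (2*K)) / K) = P * (2*K) - x * P * (2*K) := by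
        field_simp
      rw [he]; intro h; nlinarith
    · positivity
  constructor
  · intro x hx
    simp only [Set.mem_Ioo] at hx
    simp only [Set.mem_setOf_eq]
    rw [key x, key (1/2)]
    gcongr ?_ / (K * (2*K*P + 1))
    nlinarith [sq_nonneg (x - 1/2), sq_nonneg (2*K*P)]
  · rw [key (1/2)]
    rw [div_eq_div_iff (by positivity) (by positivity)]
    ring
end

section
/- For fixed K and T with 0 < K < T, the optimal training fraction α*(P) that maximizes ρ tends to √(T−K)/(√(T−K) + √K) as P → ∞ (case T > 2K; for T = 2K the limit is 1/2, consistent with the same formula). -/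
theorem alpha_star_highSNR_limit (K T : ℝ) (hK : 0 < K) (hT : 2 * K < T) :
    Filter.Tendsto
      (fun P : ℝ =>
        let γ : ℝ := (1 + P * T) * (T - K) / (P * T * (T - 2 * K))
        γ - Real.sqrt (γ * (γ - 1)))
      Filter.atTop
      (nhds (Real.sqrt (T - K) / (Real.sqrt (T - K) + Real.sqrt K))) := by
  have hT0 : 0 < T := by linarith
  have hTK : 0 < T - K := by linarith
  have hT2K : 0 < T - 2 * K := by linarith
  set γ₀ : ℝ := (T - K) / (T - 2 * K) with hγ₀
  -- Step 1: γ(P) → γ₀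
  have h1 : Filter.Tendsto (fun P : ℝ => (1 + P * T) * (T - K) / (P * T * (T - 2 * K)))
      Filter.atTop (nhds γ₀) := by
    have hPT : Filter.Tendsto (fun P : ℝ => P * T) Filter.atTop Filter.atTop :=
      Filter.Tendsto.atTop_mul_const hT0 Filter.tendsto_id
    have h2 : Filter.Tendsto (fun P : ℝ => ((P * T)⁻¹ + 1) * ((T - K) / (T - 2 * K)))
        Filter.atTop (nhds γ₀) := by
      have h3 := ((tendsto_inv_atTop_zero.comp hPT).add_const 1).mul_const ((T - K) / (T - 2 * K))
      simpa [hγ₀, Function.comp] using h3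
    refine h2.congr' ?_
    filter_upwards [Filter.eventually_gt_atTop 0] with P hP
    have hPT0 : P * T ≠ 0 := by positivity
    field_simp
  -- Step 2: continuity of x ↦ x - √(x(x-1))
  have hcont : ContinuousAt (fun x : ℝ => x - Real.sqrt (x * (x - 1))) γ₀ := by
    fun_prop
  have h4 := hcont.tendsto.comp h1
  -- Step 3: value at γ₀
  have ha : Real.sqrt (T - K) ^ 2 = T - K := Real.sq_sqrt hTK.le
  have hb : Real.sqrt K ^ 2 = K := Real.sq_sqrt hK.le
  set a := Real.sqrt (T - K) with ha'
  set b := Real.sqrt K with hb'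
  have ha0 : 0 < a := Real.sqrt_pos.mpr hTK
  have hb0 : 0 < b := Real.sqrt_pos.mpr hK
  have hden : 0 < a ^ 2 - b ^ 2 := by rw [ha, hb]; linarith
  have habne : a + b ≠ 0 := by positivity
  have e0 : T - 2 * K = a ^ 2 - b ^ 2 := by rw [ha, hb]; ring
  have e1 : γ₀ = a ^ 2 / (a ^ 2 - b ^ 2) := by rw [hγ₀, ← ha, e0]
  have e2 : γ₀ * (γ₀ - 1) = (a * b / (a ^ 2 - b ^ 2)) ^ 2 := by
    rw [e1]; field_simp; ring
  have e3 : Real.sqrt (γ₀ * (γ₀ - 1)) = a * b / (a ^ 2 - b ^ 2) := by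
    rw [e2, Real.sqrt_sq (by positivity)]
  have hval : γ₀ - Real.sqrt (γ₀ * (γ₀ - 1)) = a / (a + b) := by
    rw [e3, e1]
    rw [div_sub_div_same, div_eq_div_iff hden.ne' habne]
    ring
  simpa [hval, Function.comp_def] using h4
end

section
/- For fixed K, T with T > 2K > 0, the maximized effective SNR ρ*(P) = (PT/(T − 2K))·(√γ − √(γ−1))² with γ = (1+PT)(T−K)/(PT(T−2K)) satisfies ρ*(P)/P → T/(√(T−K) + √K)² as P → ∞. -/
open Filter Real

theorem rho_star_highSNR_limit (K T : ℝ) (hK : 0 < K) (hT : 2 * K < T) :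
    Filter.Tendsto
      (fun P : ℝ =>
        let γ : ℝ := (1 + P * T) * (T - K) / (P * T * (T - 2 * K))
        (P * T / (T - 2 * K)) * (Real.sqrt γ - Real.sqrt (γ - 1)) ^ 2 / P)
      Filter.atTop
      (nhds (T / (Real.sqrt (T - K) + Real.sqrt K) ^ 2)) := by
  have hT0 : 0 < T := by linarith
  have hd : 0 < T - 2 * K := by linarith
  have ha : 0 < T - K := by linarith
  set c : ℝ := (T - K) / (T - 2 * K) with hc
  -- limit of gamma
  have h1 : Tendsto (fun P : ℝ => P * T) atTop atTop :=
    Tendsto.atTop_mul_const hT0 tendsto_id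
  have h2 : Tendsto (fun x : ℝ => (1 + x) / x) atTop (nhds 1) := by
    have hb : Tendsto (fun x : ℝ => x⁻¹ + 1) atTop (nhds (0 + 1)) :=
      tendsto_inv_atTop_zero.add tendsto_const_nhds
    rw [zero_add] at hb
    refine hb.congr' ?_
    filter_upwards [eventually_gt_atTop (0 : ℝ)] with x hx
    field_simp
  have hγ : Tendsto (fun P : ℝ => (1 + P * T) * (T - K) / (P * T * (T - 2 * K)))
      atTop (nhds c) := by
    have h3 := (h2.comp h1).mul_const c
    simp only [Function.comp, one_mul] at h3
    refine h3.congr fun P => ?_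
    rw [hc, mul_div_mul_comm]
  -- limit of the simplified expression
  have hmain : Tendsto (fun P : ℝ =>
      T / (T - 2 * K) *
        (Real.sqrt ((1 + P * T) * (T - K) / (P * T * (T - 2 * K))) -
          Real.sqrt ((1 + P * T) * (T - K) / (P * T * (T - 2 * K)) - 1)) ^ 2)
      atTop (nhds (T / (T - 2 * K) * (Real.sqrt c - Real.sqrt (c - 1)) ^ 2)) := by
    apply Tendsto.const_mul
    exact (((Real.continuous_sqrt.tendsto c).comp hγ).sub
      ((Real.continuous_sqrt.tendsto (c - 1)).comp (hγ.sub_const 1))).pow 2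
  -- the limit value equals the target
  have heq : T / (T - 2 * K) * (Real.sqrt c - Real.sqrt (c - 1)) ^ 2
      = T / (Real.sqrt (T - K) + Real.sqrt K) ^ 2 := by
    have hsc : Real.sqrt c = Real.sqrt (T - K) / Real.sqrt (T - 2 * K) := by
      rw [hc, Real.sqrt_div ha.le]
    have hc1 : c - 1 = K / (T - 2 * K) := by
      rw [hc, div_sub_one hd.ne']; congr 1; ring
    have hsc1 : Real.sqrt (c - 1) = Real.sqrt K / Real.sqrt (T - 2 * K) := by
      rw [hc1, Real.sqrt_div hK.le]
    have hsa : Real.sqrt (T - K) ^ 2 = T - K := Real.sq_sqrt ha.le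
    have hsk : Real.sqrt K ^ 2 = K := Real.sq_sqrt hK.le
    have hsd : Real.sqrt (T - 2 * K) ^ 2 = T - 2 * K := Real.sq_sqrt hd.le
    have hsd0 : Real.sqrt (T - 2 * K) ≠ 0 := by positivity
    have hs0 : Real.sqrt (T - K) + Real.sqrt K ≠ 0 := by positivity
    have key : (Real.sqrt (T - K) - Real.sqrt K) * (Real.sqrt (T - K) + Real.sqrt K)
        = T - 2 * K := by nlinarith [hsa, hsk]
    rw [hsc, hsc1, div_sub_div_same, div_pow, hsd]
    field_simp
    linear_combination ((Real.sqrt (T - K) - Real.sqrt K) * (Real.sqrt (T - K) + Real.sqrt K) + (T - 2 * K)) * key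
  rw [← heq]
  refine hmain.congr' ?_
  filter_upwards [eventually_gt_atTop (0 : ℝ)] with P hP
  simp only
  field_simp
end

section
/- For fixed K, T with T > 2K > 0, the maximized effective SNR ρ*(P) satisfies ρ*(P)/P² → T²/(4(T−K)) as P → 0⁺; equivalently ρ*(P) ~ (PT)²/(4(T−K)) in the low-SNR limit. -/
theorem rho_star_lowSNR_limit (K T : ℝ) (hK : 0 < K) (hT : 2 * K < T) :
    Filter.Tendsto
      (fun P : ℝ =>
        let γ : ℝ := (1 + P * T) * (T - K) / (P * T * (T - 2 * K))
        (P * T / (T - 2 * K)) * (Real.sqrt γ - Real.sqrt (γ - 1)) ^ 2 / P ^ 2)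
      (nhdsWithin 0 (Set.Ioi 0))
      (nhds (T ^ 2 / (4 * (T - K)))) := by
  have hT0 : 0 < T := by linarith
  have hT2 : 0 < T - 2 * K := by linarith
  have hTK : 0 < T - K := by linarith
  set g : ℝ → ℝ := fun P => T / ((T - 2 * K) *
      (Real.sqrt ((1 + P * T) * (T - K) / (T * (T - 2 * K)))
        + Real.sqrt ((T - K + P * T * K) / (T * (T - 2 * K)))) ^ 2) with hg
  have e1 : (1 + (0:ℝ) * T) * (T - K) / (T * (T - 2 * K)) = (T - K) / (T * (T - 2 * K)) := by
    ring_nf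
  have e2 : (T - K + (0:ℝ) * T * K) / (T * (T - 2 * K)) = (T - K) / (T * (T - 2 * K)) := by
    ring_nf
  have hcpos : 0 < (T - K) / (T * (T - 2 * K)) := div_pos hTK (mul_pos hT0 hT2)
  have hg0 : g 0 = T ^ 2 / (4 * (T - K)) := by
    simp only [hg]
    rw [e1, e2]
    set c := (T - K) / (T * (T - 2 * K)) with hc
    have h4 : (Real.sqrt c + Real.sqrt c) ^ 2 = 4 * c := by
      have : (Real.sqrt c + Real.sqrt c) ^ 2 = 4 * Real.sqrt c ^ 2 := by ring
      rw [this, Real.sq_sqrt hcpos.le]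
    rw [h4, hc]
    field_simp
  have hca : ContinuousAt g 0 := by
    apply ContinuousAt.div continuousAt_const
    · fun_prop
    · have h1 : 0 < Real.sqrt ((1 + (0:ℝ) * T) * (T - K) / (T * (T - 2 * K))) := by
        rw [e1]; exact Real.sqrt_pos.mpr hcpos
      have h2 : 0 < Real.sqrt ((T - K + (0:ℝ) * T * K) / (T * (T - 2 * K))) := by
        rw [e2]; exact Real.sqrt_pos.mpr hcpos
      have : 0 < (T - 2 * K) *
          (Real.sqrt ((1 + (0:ℝ) * T) * (T - K) / (T * (T - 2 * K)))
            + Real.sqrt ((T - K + (0:ℝ) * T * K) / (T * (T - 2 * K)))) ^ 2 :=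
        mul_pos hT2 (pow_pos (by linarith) 2)
      exact this.ne'
  have hgt : Filter.Tendsto g (nhdsWithin 0 (Set.Ioi 0)) (nhds (T ^ 2 / (4 * (T - K)))) := by
    rw [← hg0]
    exact (hca.continuousWithinAt).tendsto
  apply Filter.Tendsto.congr' _ hgt
  filter_upwards [self_mem_nhdsWithin] with P hP
  have hP : 0 < P := hP
  show g P = (P * T / (T - 2 * K)) *
      (Real.sqrt ((1 + P * T) * (T - K) / (P * T * (T - 2 * K)))
        - Real.sqrt ((1 + P * T) * (T - K) / (P * T * (T - 2 * K)) - 1)) ^ 2 / P ^ 2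
  set γ : ℝ := (1 + P * T) * (T - K) / (P * T * (T - 2 * K)) with hγ
  have ha : (1 + P * T) * (T - K) / (T * (T - 2 * K)) = P * γ := by
    rw [hγ]; field_simp
  have hb : (T - K + P * T * K) / (T * (T - 2 * K)) = P * (γ - 1) := by
    rw [hγ, div_sub_one (by positivity)]; field_simp; ring
  have hγ1 : 0 ≤ γ - 1 := by
    have hpos : 0 < (T - K + P * T * K) / (T * (T - 2 * K)) := by positivity
    rw [hb] at hpos
    nlinarith
  have hγ0 : 0 ≤ γ := by linarith
  set s := Real.sqrt γ with hs
  set t := Real.sqrt (γ - 1) with ht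
  have hs2 : s ^ 2 = γ := Real.sq_sqrt hγ0
  have ht2 : t ^ 2 = γ - 1 := Real.sq_sqrt hγ1
  have hs1 : 1 ≤ s := by
    rw [hs]
    have := Real.sqrt_le_sqrt (show (1:ℝ) ≤ γ by linarith)
    simpa using this
  have ht0 : 0 ≤ t := Real.sqrt_nonneg _
  have hsum : 0 < s + t := by linarith
  have hmul : (s - t) * (s + t) = 1 := by
    have : (s - t) * (s + t) = s ^ 2 - t ^ 2 := by ring
    rw [this, hs2, ht2]; ring
  have hsqP : Real.sqrt P ^ 2 = P := Real.sq_sqrt hP.le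
  have hsqP0 : 0 < Real.sqrt P := Real.sqrt_pos.mpr hP
  simp only [hg, ha, hb, Real.sqrt_mul hP.le, ← hs, ← ht]
  have hrhs : (Real.sqrt P * s + Real.sqrt P * t) ^ 2 = P * (s + t) ^ 2 := by
    have : (Real.sqrt P * s + Real.sqrt P * t) ^ 2 = Real.sqrt P ^ 2 * (s + t) ^ 2 := by ring
    rw [this, hsqP]
  rw [hrhs]
  have hst2 : (s - t) ^ 2 * (s + t) ^ 2 = 1 := by
    have : (s - t) ^ 2 * (s + t) ^ 2 = ((s - t) * (s + t)) ^ 2 := by ring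
    rw [this, hmul]; norm_num
  field_simp
  linear_combination (-1) * hst2
end

section
/- The zero-forcing per-user rate R^ZF(P) = (1 − K*/T)·log₂(1 + ρ(P)·(M − K*)) with ρ(P) = P/(1 + (KP+1)/(KP)) satisfies R^ZF(P)/log₂(P) → 1 − K*/T as P → ∞, provided M > K*. -/
theorem zf_rate_dof (M Kstar : ℕ) (hM : Kstar < M) (hKs : 1 ≤ Kstar)
    (T K : ℝ) (hT : (Kstar : ℝ) < T) (hK : 0 < K) :
    Filter.Tendsto
      (fun P : ℝ =>
        (1 - (Kstar : ℝ) / T) *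
          Real.logb 2 (1 + (P / (1 + (K * P + 1) / (K * P))) * ((M : ℝ) - Kstar)) /
          Real.logb 2 P)
      Filter.atTop (nhds (1 - (Kstar : ℝ) / T)) := by
  set c := 1 - (Kstar : ℝ) / T with hc
  set m := (M : ℝ) - Kstar with hm_def
  have hm : 0 < m := by
    have : (Kstar : ℝ) < M := by exact_mod_cast hM
    simpa [hm_def] using sub_pos.mpr this
  set g : ℝ → ℝ := fun P => 1 / P + (1 / (1 + (K * P + 1) / (K * P))) * m with hg
  have hKP : Filter.Tendsto (fun P : ℝ => K * P) Filter.atTop Filter.atTop :=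
    Filter.Tendsto.const_mul_atTop hK Filter.tendsto_id
  have h1 : Filter.Tendsto (fun P : ℝ => 1 + (K * P + 1) / (K * P)) Filter.atTop (nhds 2) := by
    have h2 : Filter.Tendsto (fun P : ℝ => (K * P + 1) / (K * P)) Filter.atTop (nhds 1) := by
      have heq : (fun P : ℝ => (K * P + 1) / (K * P)) =ᶠ[Filter.atTop]
          fun P : ℝ => 1 + 1 / (K * P) := by
        filter_upwards [Filter.eventually_gt_atTop 0] with P hP
        have : K * P ≠ 0 := by positivity
        field_simp
      rw [Filter.tendsto_congr' heq]
      have hinv : Filter.Tendsto (fun P : ℝ => 1 / (K * P)) Filter.atTop (nhds 0) := by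
        have h6 := hKP.inv_tendsto_atTop
        simp only [Pi.inv_def] at h6
        simpa [one_div] using h6
      have h5 : Filter.Tendsto (fun P : ℝ => 1 + 1 / (K * P)) Filter.atTop (nhds (1 + 0)) :=
        tendsto_const_nhds.add hinv
      simpa using h5
    have h7 : Filter.Tendsto (fun P : ℝ => 1 + (K * P + 1) / (K * P)) Filter.atTop
        (nhds (1 + 1)) := tendsto_const_nhds.add h2
    norm_num at h7
    exact h7
  have hg_lim : Filter.Tendsto g Filter.atTop (nhds (m / 2)) := by
    have h3 : Filter.Tendsto (fun P : ℝ => 1 / P) Filter.atTop (nhds 0) := by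
      simpa [one_div] using tendsto_inv_atTop_zero
    have h4 : Filter.Tendsto (fun P : ℝ => (1 / (1 + (K * P + 1) / (K * P))) * m)
        Filter.atTop (nhds ((2:ℝ)⁻¹ * m)) := by
      simpa [one_div] using (h1.inv₀ (by norm_num)).mul_const m
    have h5 := h3.add h4
    have heq2 : (0:ℝ) + 2⁻¹ * m = m / 2 := by ring
    rw [heq2] at h5
    exact h5
  have hgpos : ∀ᶠ P in Filter.atTop, 0 < g P :=
    hg_lim.eventually (eventually_gt_nhds (by positivity))
  have hlogP : Filter.Tendsto (fun P : ℝ => Real.log P) Filter.atTop Filter.atTop :=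
    Real.tendsto_log_atTop
  have hloggP : Filter.Tendsto (fun P : ℝ => Real.log (g P)) Filter.atTop
      (nhds (Real.log (m / 2))) :=
    ((Real.continuousAt_log (by positivity)).tendsto).comp hg_lim
  have hratio : Filter.Tendsto (fun P : ℝ => Real.log (g P) / Real.log P)
      Filter.atTop (nhds 0) := by
    have := hloggP.mul hlogP.inv_tendsto_atTop
    simpa [div_eq_mul_inv] using this
  have hfinal : Filter.Tendsto (fun P : ℝ => c * (Real.log (g P) / Real.log P + 1))
      Filter.atTop (nhds c) := by
    have := (tendsto_const_nhds (x := c)).mul (hratio.add (tendsto_const_nhds (x := (1:ℝ))))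
    simpa using this
  refine hfinal.congr' ?_
  filter_upwards [hgpos, Filter.eventually_gt_atTop 1] with P hgP hP1
  have hP0 : (0:ℝ) < P := lt_trans one_pos hP1
  have hlogPpos : 0 < Real.log P := Real.log_pos hP1
  have hfg : 1 + (P / (1 + (K * P + 1) / (K * P))) * m = g P * P := by
    have hD : K * P ≠ 0 := by positivity
    simp only [hg]
    field_simp
  rw [hfg]
  have hlogmul : Real.log (g P * P) = Real.log (g P) + Real.log P :=
    Real.log_mul (ne_of_gt hgP) (ne_of_gt hP0)
  rw [Real.logb, Real.logb, hlogmul]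
  have hl2 : Real.log 2 ≠ 0 := ne_of_gt (Real.log_pos (by norm_num))
  field_simp
end
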